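/- Let μ be the symmetric part of a bounded-support probability measure ν on ℝ, ρ_t = (1−t)μ + tν for t ∈ [0,1], and define φ(t) = φ⁺(t) − φ⁻(t) where φ^±(t) = E_z ∫ (log ∫ exp(√r z x ± r x x* − (r/2)x²) dρ_t(x)) dρ_t(x*), with z ∼ N(0,1) and r > 0 fixed. Then φ(0) = 0 and φ'(0) = 0. -/

import Mathlib

open MeasureTheory ProbabilityTheory Set Real
open scoped ENNReal NNReal

-- basic log lipschitz lemma
lemma abs_log_sub_log_le {m a b : ℝ} (hm : 0 < m) (ha : m ≤ a) (hb : m ≤ b) :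
    |Real.log a - Real.log b| ≤ |a - b| / m := by
  wlog h : b ≤ a generalizing a b
  · rw [abs_sub_comm, abs_sub_comm a b]; exact this hb ha (le_of_not_ge h)
  have hb0 : 0 < b := lt_of_lt_of_le hm hb
  have ha0 : 0 < a := lt_of_lt_of_le hm ha
  rw [abs_of_nonneg (sub_nonneg.2 ((Real.log_le_log_iff hb0 ha0).2 h)),
    abs_of_nonneg (sub_nonneg.2 h)]
  rw [← Real.log_div (ne_of_gt ha0) (ne_of_gt hb0)]
  calc Real.log (a / b) ≤ a / b - 1 := Real.log_le_sub_one_of_pos (div_pos ha0 hb0)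
    _ = (a - b) / b := by field_simp
    _ ≤ (a - b) / m := by gcongr

lemma gauss_neg : Measure.map (fun x : ℝ => -x) (gaussianReal 0 1) = gaussianReal 0 1 := by
  have h := gaussianReal_map_const_mul (μ := 0) (v := 1) (-1)
  have he : (fun x : ℝ => -x) = (fun x : ℝ => (-1 : ℝ) * x) := by funext x; ring
  rw [he, h]
  norm_num

lemma int_exp_gauss (b : ℝ) :
    Integrable (fun z => Real.exp (b * z)) (gaussianReal 0 1) := by
  rw [gaussianReal_of_var_ne_zero _ one_ne_zero]
  rw [integrable_withDensity_iff (measurable_gaussianPDF _ _)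
    (ae_of_all _ fun x => ENNReal.ofReal_lt_top)]
  have : ∀ x : ℝ, Real.exp (b * x) * (gaussianPDF 0 1 x).toReal
      = (√(2 * π))⁻¹ * (Real.exp (b ^ 2 / 2) * Real.exp (-(1/2) * (x - b) ^ 2)) := by
    intro x
    rw [gaussianPDF, ENNReal.toReal_ofReal (gaussianPDFReal_nonneg _ _ _), gaussianPDFReal]
    rw [mul_comm, mul_assoc, ← Real.exp_add, mul_assoc, ← Real.exp_add]
    push_cast
    ring_nf
  simp only [this]
  exact (((integrable_exp_neg_mul_sq (by norm_num : (0:ℝ) < 1/2)).comp_sub_right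
    b).const_mul _).const_mul _

section
variable (ν : Measure ℝ) [IsProbabilityMeasure ν] (K : ℝ)
  (hsupp : ∀ᵐ x ∂ν, |x| ≤ K)
  (μ : Measure ℝ)
  (hμ : μ = (2 : ℝ≥0∞)⁻¹ • (ν + Measure.map (fun x => -x) ν))

include hμ in
lemma muProb : IsProbabilityMeasure μ := by
  constructor
  rw [hμ]
  simp [Measure.map_apply measurable_neg MeasurableSet.univ, measure_univ]
  exact ENNReal.inv_two_add_inv_two

include hμ in
lemma muSymm : Measure.map (fun x : ℝ => -x) μ = μ := by
  rw [hμ, Measure.map_smul, Measure.map_add _ _ measurable_neg,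
    Measure.map_map measurable_neg measurable_neg]
  simp only [Function.comp_def, neg_neg]
  rw [Measure.map_id']
  rw [add_comm]

include hsupp hμ in
lemma muSupp : ∀ᵐ x ∂μ, |x| ≤ K := by
  rw [hμ]
  have hms : MeasurableSet {x : ℝ | |x| ≤ K} :=
    (isClosed_le continuous_abs continuous_const).measurableSet
  refine (Measure.ae_smul_measure ?_ _)
  rw [ae_add_measure_iff]
  refine ⟨hsupp, ?_⟩
  rw [ae_map_iff measurable_neg.aemeasurable hms]
  filter_upwards [hsupp] with x hx
  simpa using hx
end

section
variable {ν μ : Measure ℝ} [IsProbabilityMeasure ν] [IsProbabilityMeasure μ] {K : ℝ}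
  {ρ : ℝ → Measure ℝ}
  (hρ : ∀ t, ρ t = ENNReal.ofReal (1 - t) • μ + ENNReal.ofReal t • ν)

include hρ in
lemma rhoZero : ρ 0 = μ := by simp [hρ 0]

include hρ in
lemma rhoOne : ρ 1 = ν := by simp [hρ 1]

include hρ in
lemma rhoProb {t : ℝ} (ht : t ∈ Icc (0:ℝ) 1) : IsProbabilityMeasure (ρ t) := by
  constructor
  rw [hρ]
  simp only [Measure.add_apply, Measure.smul_apply, measure_univ, smul_eq_mul, mul_one]
  rw [← ENNReal.ofReal_add (by linarith [ht.2]) ht.1]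
  norm_num

include hρ in
lemma rhoSupp {t : ℝ} (hμs : ∀ᵐ x ∂μ, |x| ≤ K) (hνs : ∀ᵐ x ∂ν, |x| ≤ K) :
    ∀ᵐ x ∂(ρ t), |x| ≤ K := by
  rw [hρ, ae_add_measure_iff]
  exact ⟨Measure.ae_smul_measure hμs _, Measure.ae_smul_measure hνs _⟩

include hρ in
lemma rhoInt {t : ℝ} (ht : t ∈ Icc (0:ℝ) 1) {f : ℝ → ℝ}
    (hfμ : Integrable f μ) (hfν : Integrable f ν) :
    ∫ x, f x ∂(ρ t) = (1 - t) * ∫ x, f x ∂μ + t * ∫ x, f x ∂ν := by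
  rw [hρ, integral_add_measure (hfμ.smul_measure ENNReal.ofReal_lt_top.ne)
      (hfν.smul_measure ENNReal.ofReal_lt_top.ne),
    integral_smul_measure, integral_smul_measure,
    ENNReal.toReal_ofReal (by linarith [ht.2]), ENNReal.toReal_ofReal ht.1]
  simp [smul_eq_mul]
end

section
variable {r K : ℝ} (hr : 0 < r) (hK : 0 < K)

/-- the exponent -/
noncomputable def expo (r z xs x : ℝ) : ℝ := Real.sqrt r * z * x + r * x * xs - r / 2 * x ^ 2
/-- uniform-in-xs bound on |expo| -/
noncomputable def cb (r K z : ℝ) : ℝ := Real.sqrt r * |z| * K + 3 / 2 * r * K ^ 2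

include hr hK in
lemma expo_abs_le {z xs x : ℝ} (hxs : |xs| ≤ K) (hx : |x| ≤ K) :
    |expo r z xs x| ≤ cb r K z := by
  have h0 : (0:ℝ) ≤ Real.sqrt r := Real.sqrt_nonneg r
  have h1 : |Real.sqrt r * z * x| ≤ Real.sqrt r * |z| * K := by
    rw [abs_mul, abs_mul, abs_of_nonneg h0]
    gcongr
  have h2 : |r * x * xs| ≤ r * K * K := by
    rw [abs_mul, abs_mul, abs_of_nonneg hr.le]
    gcongr
  have h3 : |r / 2 * x ^ 2| ≤ r / 2 * K ^ 2 := by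
    rw [abs_mul, abs_of_nonneg (by positivity : (0:ℝ) ≤ r / 2), abs_pow]
    gcongr
  calc |expo r z xs x| ≤ |Real.sqrt r * z * x| + |r * x * xs| + |r / 2 * x ^ 2| := by
        unfold expo; exact (abs_sub _ _).trans (by gcongr; exact abs_add_le _ _)
    _ ≤ Real.sqrt r * |z| * K + r * K * K + r / 2 * K ^ 2 := by gcongr
    _ = cb r K z := by unfold cb; ring

lemma expo_meas (z xs : ℝ) : Measurable fun x => Real.exp (expo r z xs x) := by
  unfold expo; fun_prop

lemma g_integrable {m : Measure ℝ} [IsFiniteMeasure m] (hm : ∀ᵐ x ∂m, |x| ≤ K)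
    (hr : 0 < r) (z xs : ℝ) :
    Integrable (fun x => Real.exp (expo r z xs x)) m := by
  refine Integrable.mono' (integrable_const (Real.exp (Real.sqrt r * |z| * K + r * K * |xs|)))
    (expo_meas z xs).aestronglyMeasurable ?_
  filter_upwards [hm] with x hx
  rw [Real.norm_eq_abs, abs_of_nonneg (Real.exp_pos _).le, Real.exp_le_exp]
  unfold expo
  have h0 : (0:ℝ) ≤ Real.sqrt r := Real.sqrt_nonneg r
  have h1 : Real.sqrt r * z * x ≤ Real.sqrt r * |z| * K := by
    calc Real.sqrt r * z * x ≤ |Real.sqrt r * z * x| := le_abs_self _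
      _ = Real.sqrt r * |z| * |x| := by rw [abs_mul, abs_mul, abs_of_nonneg h0]
      _ ≤ Real.sqrt r * |z| * K := by gcongr
  have h2 : r * x * xs ≤ r * K * |xs| := by
    calc r * x * xs ≤ |r * x * xs| := le_abs_self _
      _ = r * |x| * |xs| := by rw [abs_mul, abs_mul, abs_of_nonneg hr.le]
      _ ≤ r * K * |xs| := by gcongr
  nlinarith [sq_nonneg x, hr.le]

include hr hK in
lemma I_bounds {m : Measure ℝ} [IsProbabilityMeasure m] (hm : ∀ᵐ x ∂m, |x| ≤ K)
    {z xs : ℝ} (hxs : |xs| ≤ K) :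
    Real.exp (-(cb r K z)) ≤ (∫ x, Real.exp (expo r z xs x) ∂m) ∧
      (∫ x, Real.exp (expo r z xs x) ∂m) ≤ Real.exp (cb r K z) := by
  constructor
  · have : ∫ x, Real.exp (-(cb r K z)) ∂m = Real.exp (-(cb r K z)) := by
      simp [integral_const]
    rw [← this]
    refine integral_mono_ae (integrable_const _) (g_integrable hm hr z xs) ?_
    filter_upwards [hm] with x hx
    rw [Real.exp_le_exp]
    have := expo_abs_le hr hK (z := z) hxs hx
    rw [abs_le] at this; linarith [this.1]
  · have : ∫ x, Real.exp (cb r K z) ∂m = Real.exp (cb r K z) := by simp [integral_const]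
    rw [← this]
    refine integral_mono_ae (g_integrable hm hr z xs) (integrable_const _) ?_
    filter_upwards [hm] with x hx
    rw [Real.exp_le_exp]
    have := expo_abs_le hr hK (z := z) hxs hx
    rw [abs_le] at this; linarith [this.2]

include hr hK in
lemma log_I_abs_le {m : Measure ℝ} [IsProbabilityMeasure m] (hm : ∀ᵐ x ∂m, |x| ≤ K)
    {z xs : ℝ} (hxs : |xs| ≤ K) :
    |Real.log (∫ x, Real.exp (expo r z xs x) ∂m)| ≤ cb r K z := by
  obtain ⟨h1, h2⟩ := I_bounds hr hK hm hxs
  have hpos : 0 < ∫ x, Real.exp (expo r z xs x) ∂m :=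
    lt_of_lt_of_le (Real.exp_pos _) h1
  rw [abs_le]
  constructor
  · calc -(cb r K z) = Real.log (Real.exp (-(cb r K z))) := (Real.log_exp _).symm
      _ ≤ _ := Real.log_le_log (Real.exp_pos _) h1
  · calc Real.log _ ≤ Real.log (Real.exp (cb r K z)) := Real.log_le_log hpos h2
      _ = cb r K z := Real.log_exp _

/-- joint strong measurability of the inner integral -/
lemma I_measurable {m : Measure ℝ} [SFinite m] :
    StronglyMeasurable fun p : ℝ × ℝ => ∫ x, Real.exp (expo r p.1 p.2 x) ∂m := by
  apply StronglyMeasurable.integral_prod_right'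
    (f := fun q : (ℝ × ℝ) × ℝ => Real.exp (expo r q.1.1 q.1.2 q.2))
  apply Continuous.stronglyMeasurable
  unfold expo
  fun_prop
end

/-- integral invariance under negation for a neg-invariant measure -/
lemma int_neg_eq {μ : Measure ℝ} (hs : Measure.map (fun x : ℝ => -x) μ = μ)
    {F : ℝ → ℝ} (hF : AEStronglyMeasurable F μ) :
    ∫ x, F (-x) ∂μ = ∫ x, F x ∂μ := by
  conv_rhs => rw [← hs]
  rw [integral_map measurable_neg.aemeasurable (by rwa [hs])]

section main
variable {ν μ : Measure ℝ} [IsProbabilityMeasure ν] [IsProbabilityMeasure μ]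
  {K r : ℝ} (hr : 0 < r) (hK : 0 < K)
  (hμK : ∀ᵐ x ∂μ, |x| ≤ K) (hνK : ∀ᵐ x ∂ν, |x| ≤ K)
  {ρ : ℝ → Measure ℝ}
  (hρ : ∀ t, ρ t = ENNReal.ofReal (1 - t) • μ + ENNReal.ofReal t • ν)

include hr hK hμK hνK hρ in
/-- the key quantitative estimate: the inner log-integral moves at speed O(t) -/
lemma key_est {t : ℝ} (ht : t ∈ Icc (0:ℝ) 1) {z xs : ℝ} (hxs : |xs| ≤ K) :
    |Real.log (∫ x, Real.exp (expo r z xs x) ∂(ρ t))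
      - Real.log (∫ x, Real.exp (expo r z xs x) ∂μ)|
      ≤ 2 * t * Real.exp (2 * cb r K z) := by
  haveI := rhoProb hρ ht
  have hsplit := rhoInt hρ ht (g_integrable hμK hr z xs) (g_integrable hνK hr z xs)
  obtain ⟨hA1, hA2⟩ := I_bounds hr hK hμK hxs (m := μ)
  obtain ⟨hC1, hC2⟩ := I_bounds hr hK hνK hxs (m := ν)
  obtain ⟨hI1, hI2⟩ := I_bounds hr hK (rhoSupp hρ hμK hνK) hxs (m := ρ t)
  have key := abs_log_sub_log_le (Real.exp_pos (-(cb r K z))) hI1 hA1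
  refine le_trans key ?_
  rw [div_le_iff₀ (Real.exp_pos _)]
  have habs : |(∫ x, Real.exp (expo r z xs x) ∂(ρ t)) - ∫ x, Real.exp (expo r z xs x) ∂μ|
      ≤ t * (2 * Real.exp (cb r K z)) := by
    rw [hsplit]
    have : (1 - t) * (∫ x, Real.exp (expo r z xs x) ∂μ)
        + t * (∫ x, Real.exp (expo r z xs x) ∂ν) - ∫ x, Real.exp (expo r z xs x) ∂μ
        = t * ((∫ x, Real.exp (expo r z xs x) ∂ν) - ∫ x, Real.exp (expo r z xs x) ∂μ) := by
      ring
    rw [this, abs_mul, abs_of_nonneg ht.1]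
    gcongr t * ?_ 
    · exact ht.1
    have h1 : (0:ℝ) < Real.exp (-(cb r K z)) := Real.exp_pos _
    rw [abs_sub_le_iff]
    constructor <;> nlinarith [Real.exp_pos (-(cb r K z))]
  calc |(∫ x, Real.exp (expo r z xs x) ∂(ρ t)) - ∫ x, Real.exp (expo r z xs x) ∂μ|
      ≤ t * (2 * Real.exp (cb r K z)) := habs
    _ = 2 * t * Real.exp (cb r K z) := by ring
    _ ≤ 2 * t * Real.exp (2 * cb r K z) * Real.exp (-(cb r K z)) := by
        rw [mul_assoc (2*t), ← Real.exp_add]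
        gcongr
        · linarith [ht.1]
        · linarith
end main
section integ
variable {ν μ : Measure ℝ} [IsProbabilityMeasure ν] [IsProbabilityMeasure μ]
  {K r : ℝ} (hr : 0 < r) (hK : 0 < K)

/-- joint strong measurability of log of the inner integral -/
lemma logI_measurable {m : Measure ℝ} [SFinite m] :
    StronglyMeasurable fun p : ℝ × ℝ => Real.log (∫ x, Real.exp (expo r p.1 p.2 x) ∂m) :=
  (Real.measurable_log.comp (I_measurable (r := r) (m := m)).measurable).stronglyMeasurable

include hr hK in
lemma intL {m m' : Measure ℝ} [SFinite m] [IsProbabilityMeasure m] [IsFiniteMeasure m']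
    (hmK : ∀ᵐ x ∂m, |x| ≤ K) (hm'K : ∀ᵐ x ∂m', |x| ≤ K) (z : ℝ) :
    Integrable (fun xs => Real.log (∫ x, Real.exp (expo r z xs x) ∂m)) m' := by
  refine Integrable.mono' (integrable_const (cb r K z))
    ((logI_measurable (r := r) (m := m)).measurable.comp
      (measurable_const.prodMk measurable_id)).aestronglyMeasurable ?_
  filter_upwards [hm'K] with xs hxs
  exact log_I_abs_le hr hK hmK hxs

include hr hK in
lemma intLneg {m m' : Measure ℝ} [SFinite m] [IsProbabilityMeasure m] [IsFiniteMeasure m']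
    (hmK : ∀ᵐ x ∂m, |x| ≤ K) (hm'K : ∀ᵐ x ∂m', |x| ≤ K) (z : ℝ) :
    Integrable (fun xs => Real.log (∫ x, Real.exp (expo r z (-xs) x) ∂m)) m' := by
  refine Integrable.mono' (integrable_const (cb r K z))
    ((logI_measurable (r := r) (m := m)).measurable.comp
      (measurable_const.prodMk measurable_id.neg)).aestronglyMeasurable ?_
  filter_upwards [hm'K] with xs hxs
  exact log_I_abs_le hr hK hmK (by simpa using hxs)

include hr hK in
lemma eInt : Integrable (fun z => Real.exp (2 * cb r K z)) (gaussianReal 0 1) := by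
  have h1 : Integrable (fun z => Real.exp (2 * Real.sqrt r * K * z)
      + Real.exp (-(2 * Real.sqrt r * K) * z)) (gaussianReal 0 1) :=
    (int_exp_gauss _).add (int_exp_gauss _)
  have h2 : Integrable (fun z => Real.exp (2 * Real.sqrt r * K * |z|)) (gaussianReal 0 1) := by
    refine h1.mono' (Continuous.aestronglyMeasurable (by continuity)) ?_
    filter_upwards with z
    rw [Real.norm_eq_abs, abs_of_nonneg (Real.exp_pos _).le]
    rcases le_or_gt 0 z with h | h
    · rw [abs_of_nonneg h]
      nlinarith [Real.exp_pos (-(2 * Real.sqrt r * K) * z)]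
    · rw [abs_of_neg h]
      have : 2 * Real.sqrt r * K * -z = -(2 * Real.sqrt r * K) * z := by ring
      rw [this]
      nlinarith [Real.exp_pos (2 * Real.sqrt r * K * z)]
  have : (fun z => Real.exp (2 * cb r K z))
      = fun z => Real.exp (3 * r * K ^ 2) * Real.exp (2 * Real.sqrt r * K * |z|) := by
    funext z
    rw [← Real.exp_add]
    unfold cb
    ring_nf
  rw [this]
  exact h2.const_mul _

include hr hK in
lemma cb_nonneg (z : ℝ) : 0 ≤ cb r K z := by
  unfold cb
  have := Real.sqrt_nonneg r
  positivity

include hr hK in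
lemma cbInt : Integrable (fun z => cb r K z) (gaussianReal 0 1) := by
  refine (eInt hr hK).mono' (Continuous.aestronglyMeasurable (by unfold cb; continuity)) ?_
  filter_upwards with z
  rw [Real.norm_eq_abs, abs_of_nonneg (cb_nonneg hr hK z)]
  calc cb r K z ≤ cb r K z + 1 := by linarith
    _ ≤ Real.exp (cb r K z) := Real.add_one_le_exp _
    _ ≤ Real.exp (2 * cb r K z) := by
        rw [Real.exp_le_exp]; linarith [cb_nonneg hr hK z]

include hr hK in
lemma intPz {m m' : Measure ℝ} [SFinite m] [IsProbabilityMeasure m] [IsProbabilityMeasure m']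
    [SFinite m'] (hmK : ∀ᵐ x ∂m, |x| ≤ K) (hm'K : ∀ᵐ x ∂m', |x| ≤ K) :
    Integrable (fun z => ∫ xs, Real.log (∫ x, Real.exp (expo r z xs x) ∂m) ∂m')
      (gaussianReal 0 1) := by
  have hsm2 : StronglyMeasurable fun z : ℝ =>
      ∫ xs, Real.log (∫ x, Real.exp (expo r z xs x) ∂m) ∂m' :=
    StronglyMeasurable.integral_prod_right' (ν := m') (logI_measurable (r := r) (m := m))
  refine (cbInt hr hK).mono' hsm2.aestronglyMeasurable ?_
  filter_upwards with z
  rw [Real.norm_eq_abs]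
  have := norm_integral_le_of_norm_le_const (μ := m')
    (f := fun xs => Real.log (∫ x, Real.exp (expo r z xs x) ∂m)) (C := cb r K z) ?_
  · simpa using this
  · filter_upwards [hm'K] with xs hxs
    rw [Real.norm_eq_abs]
    exact log_I_abs_le hr hK hmK hxs

set_option maxHeartbeats 1000000 in
include hr hK in
lemma intPzneg {m m' : Measure ℝ} [SFinite m] [IsProbabilityMeasure m] [IsProbabilityMeasure m']
    [SFinite m'] (hmK : ∀ᵐ x ∂m, |x| ≤ K) (hm'K : ∀ᵐ x ∂m', |x| ≤ K) :
    Integrable (fun z => ∫ xs, Real.log (∫ x, Real.exp (expo r z (-xs) x) ∂m) ∂m')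
      (gaussianReal 0 1) := by
  have hsm' := StronglyMeasurable.comp_measurable
    (f := fun p : ℝ × ℝ => Real.log (∫ x, Real.exp (expo r p.1 p.2 x) ∂m))
    (g := fun p : ℝ × ℝ => (p.1, -p.2))
    (logI_measurable (r := r) (m := m)) (measurable_fst.prodMk measurable_snd.neg)
  have hsm : StronglyMeasurable fun p : ℝ × ℝ =>
      Real.log (∫ x, Real.exp (expo r p.1 (-p.2) x) ∂m) := hsm'
  have hsm2 : StronglyMeasurable fun z : ℝ =>
      ∫ xs, Real.log (∫ x, Real.exp (expo r z (-xs) x) ∂m) ∂m' :=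
    StronglyMeasurable.integral_prod_right' (ν := m') hsm
  refine (cbInt hr hK).mono' hsm2.aestronglyMeasurable ?_
  filter_upwards with z
  rw [Real.norm_eq_abs]
  have := norm_integral_le_of_norm_le_const (μ := m')
    (f := fun xs => Real.log (∫ x, Real.exp (expo r z (-xs) x) ∂m)) (C := cb r K z) ?_
  · simpa using this
  · filter_upwards [hm'K] with xs hxs
    rw [Real.norm_eq_abs]
    exact log_I_abs_le hr hK hmK (by simpa using hxs)
end integ

lemma int_neg_int {μ : Measure ℝ} (hs : Measure.map (fun x : ℝ => -x) μ = μ)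
    {F : ℝ → ℝ} (hF : Integrable F μ) : Integrable (fun x => F (-x)) μ := by
  have hF' : Integrable F (Measure.map (fun x : ℝ => -x) μ) := by rwa [hs]
  have := (integrable_map_measure (by rw [hs]; exact hF.1)
    measurable_neg.aemeasurable).1 hF'
  exact this

section big
variable {ν μ : Measure ℝ} [IsProbabilityMeasure ν] [IsProbabilityMeasure μ]
  {K r : ℝ} (hr : 0 < r) (hK : 0 < K)
  (hμK : ∀ᵐ x ∂μ, |x| ≤ K) (hνK : ∀ᵐ x ∂ν, |x| ≤ K)
  {ρ : ℝ → Measure ℝ}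
  (hρ : ∀ t, ρ t = ENNReal.ofReal (1 - t) • μ + ENNReal.ofReal t • ν)

include hr hK hμK hνK hρ in
lemma rep (hμsymm : Measure.map (fun x : ℝ => -x) μ = μ) {t : ℝ} (ht : t ∈ Icc (0:ℝ) 1) :
    (∫ z, ∫ xs, Real.log (∫ x, Real.exp (expo r z xs x) ∂(ρ t)) ∂(ρ t) ∂gaussianReal 0 1)
      - ∫ z, ∫ xs, Real.log (∫ x, Real.exp (expo r z (-xs) x) ∂(ρ t)) ∂(ρ t) ∂gaussianReal 0 1
    = t * ∫ z, (∫ xs, (Real.log (∫ x, Real.exp (expo r z xs x) ∂(ρ t))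
        - Real.log (∫ x, Real.exp (expo r z (-xs) x) ∂(ρ t))) ∂ν) ∂gaussianReal 0 1 := by
  haveI : IsProbabilityMeasure (ρ t) := rhoProb hρ ht
  haveI : SFinite (ρ t) := by rw [hρ]; infer_instance
  have hρtK : ∀ᵐ x ∂(ρ t), |x| ≤ K := rhoSupp hρ hμK hνK
  have step : ∀ z : ℝ,
      (∫ xs, Real.log (∫ x, Real.exp (expo r z xs x) ∂(ρ t)) ∂(ρ t))
        - ∫ xs, Real.log (∫ x, Real.exp (expo r z (-xs) x) ∂(ρ t)) ∂(ρ t)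
      = t * ∫ xs, (Real.log (∫ x, Real.exp (expo r z xs x) ∂(ρ t))
          - Real.log (∫ x, Real.exp (expo r z (-xs) x) ∂(ρ t))) ∂ν := by
    intro z
    rw [← integral_sub (intL hr hK hρtK hρtK z) (intLneg hr hK hρtK hρtK z)]
    rw [rhoInt (f := fun xs => Real.log (∫ x, Real.exp (expo r z xs x) ∂(ρ t))
          - Real.log (∫ x, Real.exp (expo r z (-xs) x) ∂(ρ t))) hρ ht
        ((intL hr hK hρtK hμK z).sub (intLneg hr hK hρtK hμK z))
        ((intL hr hK hρtK hνK z).sub (intLneg hr hK hρtK hνK z))]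
    have hzero : ∫ xs, (Real.log (∫ x, Real.exp (expo r z xs x) ∂(ρ t))
        - Real.log (∫ x, Real.exp (expo r z (-xs) x) ∂(ρ t))) ∂μ = 0 := by
      rw [integral_sub (intL hr hK hρtK hμK z) (intLneg hr hK hρtK hμK z)]
      rw [int_neg_eq hμsymm
        (F := fun xs => Real.log (∫ x, Real.exp (expo r z xs x) ∂(ρ t)))
        (intL hr hK hρtK hμK z).1]
      ring
    rw [hzero]
    ring
  rw [← integral_sub (intPz hr hK hρtK hρtK) (intPzneg hr hK hρtK hρtK),
    ← integral_const_mul]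
  exact integral_congr_ae (Filter.Eventually.of_forall step)

include hr hK hμK hνK hρ in
lemma Hbound (hμsymm : Measure.map (fun x : ℝ => -x) μ = μ)
    (hγ : Measure.map (fun x : ℝ => -x) (gaussianReal 0 1) = gaussianReal 0 1)
    {t : ℝ} (ht : t ∈ Icc (0:ℝ) 1) :
    |∫ z, (∫ xs, (Real.log (∫ x, Real.exp (expo r z xs x) ∂(ρ t))
        - Real.log (∫ x, Real.exp (expo r z (-xs) x) ∂(ρ t))) ∂ν) ∂gaussianReal 0 1|
      ≤ 4 * t * ∫ z, Real.exp (2 * cb r K z) ∂gaussianReal 0 1 := by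
  haveI : IsProbabilityMeasure (ρ t) := rhoProb hρ ht
  haveI : SFinite (ρ t) := by rw [hρ]; infer_instance
  have hρtK : ∀ᵐ x ∂(ρ t), |x| ≤ K := rhoSupp hρ hμK hνK
  -- J t and J 0 as functions of z
  set Jt : ℝ → ℝ := fun z => ∫ xs, (Real.log (∫ x, Real.exp (expo r z xs x) ∂(ρ t))
      - Real.log (∫ x, Real.exp (expo r z (-xs) x) ∂(ρ t))) ∂ν with hJt_def
  set J0 : ℝ → ℝ := fun z => ∫ xs, (Real.log (∫ x, Real.exp (expo r z xs x) ∂μ)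
      - Real.log (∫ x, Real.exp (expo r z (-xs) x) ∂μ)) ∂ν with hJ0_def
  have hJtInt : Integrable Jt (gaussianReal 0 1) := by
    refine Integrable.congr ((intPz hr hK hρtK hνK).sub (intPzneg hr hK hρtK hνK)) ?_
    filter_upwards with z
    rw [hJt_def]
    exact (integral_sub (intL hr hK hρtK hνK z) (intLneg hr hK hρtK hνK z)).symm
  have hJ0Int : Integrable J0 (gaussianReal 0 1) := by
    refine Integrable.congr ((intPz hr hK hμK hνK).sub (intPzneg hr hK hμK hνK)) ?_
    filter_upwards with z
    rw [hJ0_def]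
    exact (integral_sub (intL hr hK hμK hνK z) (intLneg hr hK hμK hνK z)).symm
  -- step 1 : ∫ J0 = 0 by symmetry
  have hLL : ∀ z xs : ℝ, (∫ x, Real.exp (expo r z (-xs) x) ∂μ)
      = ∫ x, Real.exp (expo r (-z) xs x) ∂μ := by
    intro z xs
    have h1 : (fun x => Real.exp (expo r z (-xs) x))
        = fun x => Real.exp (expo r (-z) xs (-x)) := by
      funext x; unfold expo; ring_nf
    rw [h1]
    exact int_neg_eq hμsymm (expo_meas (-z) xs).aestronglyMeasurable
  have hJ0eq : ∀ z, J0 z = (∫ xs, Real.log (∫ x, Real.exp (expo r z xs x) ∂μ) ∂ν)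
      - ∫ xs, Real.log (∫ x, Real.exp (expo r (-z) xs x) ∂μ) ∂ν := by
    intro z
    rw [hJ0_def]
    simp only [hLL]
    exact integral_sub (intL hr hK hμK hνK z) (intL hr hK hμK hνK (-z))
  have h0 : ∫ z, J0 z ∂gaussianReal 0 1 = 0 := by
    have hP : Integrable (fun z => ∫ xs, Real.log (∫ x, Real.exp (expo r z xs x) ∂μ) ∂ν)
        (gaussianReal 0 1) := intPz hr hK hμK hνK
    calc ∫ z, J0 z ∂gaussianReal 0 1
        = ∫ z, ((∫ xs, Real.log (∫ x, Real.exp (expo r z xs x) ∂μ) ∂ν)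
          - ∫ xs, Real.log (∫ x, Real.exp (expo r (-z) xs x) ∂μ) ∂ν) ∂gaussianReal 0 1 :=
          integral_congr_ae (Filter.Eventually.of_forall hJ0eq)
      _ = (∫ z, (∫ xs, Real.log (∫ x, Real.exp (expo r z xs x) ∂μ) ∂ν) ∂gaussianReal 0 1)
          - ∫ z, (∫ xs, Real.log (∫ x, Real.exp (expo r (-z) xs x) ∂μ) ∂ν)
            ∂gaussianReal 0 1 := integral_sub hP (int_neg_int hγ hP)
      _ = 0 := by
          rw [int_neg_eq hγ hP.1]
          ring
  -- step 2 : pointwise bound on Jt - J0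
  have hptw : ∀ z, |Jt z - J0 z| ≤ 4 * t * Real.exp (2 * cb r K z) := by
    intro z
    have hsub : Jt z - J0 z = ∫ xs,
        ((Real.log (∫ x, Real.exp (expo r z xs x) ∂(ρ t))
          - Real.log (∫ x, Real.exp (expo r z (-xs) x) ∂(ρ t)))
        - (Real.log (∫ x, Real.exp (expo r z xs x) ∂μ)
          - Real.log (∫ x, Real.exp (expo r z (-xs) x) ∂μ))) ∂ν := by
      rw [hJt_def, hJ0_def]
      exact (integral_sub ((intL hr hK hρtK hνK z).sub (intLneg hr hK hρtK hνK z))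
        ((intL hr hK hμK hνK z).sub (intLneg hr hK hμK hνK z))).symm
    rw [hsub, ← Real.norm_eq_abs]
    refine le_trans (norm_integral_le_of_norm_le_const
      (C := 4 * t * Real.exp (2 * cb r K z)) ?_) (by simp)
    filter_upwards [hνK] with xs hxs
    rw [Real.norm_eq_abs]
    have h1 := key_est hr hK hμK hνK hρ ht (z := z) hxs
    have h2 := key_est hr hK hμK hνK hρ ht (z := z) (xs := -xs) (by simpa using hxs)
    have hrearr : (Real.log (∫ x, Real.exp (expo r z xs x) ∂(ρ t))
        - Real.log (∫ x, Real.exp (expo r z (-xs) x) ∂(ρ t)))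
      - (Real.log (∫ x, Real.exp (expo r z xs x) ∂μ)
        - Real.log (∫ x, Real.exp (expo r z (-xs) x) ∂μ))
      = (Real.log (∫ x, Real.exp (expo r z xs x) ∂(ρ t))
        - Real.log (∫ x, Real.exp (expo r z xs x) ∂μ))
      - (Real.log (∫ x, Real.exp (expo r z (-xs) x) ∂(ρ t))
        - Real.log (∫ x, Real.exp (expo r z (-xs) x) ∂μ)) := by ring
    rw [hrearr]
    refine (abs_sub _ _).trans ?_
    have := add_le_add h1 h2
    linarith
  -- step 3 : conclude
  have key : |∫ z, Jt z ∂gaussianReal 0 1| = |∫ z, (Jt z - J0 z) ∂gaussianReal 0 1| := by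
    rw [integral_sub hJtInt hJ0Int, h0, sub_zero]
  rw [key]
  calc |∫ z, (Jt z - J0 z) ∂gaussianReal 0 1|
      ≤ ∫ z, |Jt z - J0 z| ∂gaussianReal 0 1 := by
        simpa using norm_integral_le_integral_norm (fun z => Jt z - J0 z)
    _ ≤ ∫ z, 4 * t * Real.exp (2 * cb r K z) ∂gaussianReal 0 1 :=
        integral_mono (hJtInt.sub hJ0Int).abs (((eInt hr hK)).const_mul (4 * t)) hptw
    _ = 4 * t * ∫ z, Real.exp (2 * cb r K z) ∂gaussianReal 0 1 := integral_const_mul _ _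
end big

/-- Along the Franz–Parisi interpolation `ρ_t = (1−t)μ + tν` between the
symmetrization `μ` of `ν` and `ν`, the function `φ = φ⁺ − φ⁻` satisfies
`φ(0) = 0` and `φ'(0) = 0`. -/
theorem stmt_9
    (ν : Measure ℝ) [IsProbabilityMeasure ν] (K : ℝ) (hK : 0 < K)
    (hsupp : ∀ᵐ x ∂ν, |x| ≤ K)
    (μ : Measure ℝ)
    (hμ : μ = (2 : ℝ≥0∞)⁻¹ • (ν + Measure.map (fun x => -x) ν))
    (ρ : ℝ → Measure ℝ)
    (hρ : ∀ t, ρ t = ENNReal.ofReal (1 - t) • μ + ENNReal.ofReal t • ν)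
    (r : ℝ) (hr : 0 < r)
    (φp φm φ : ℝ → ℝ)
    (hφp : ∀ t, φp t = ∫ z, ∫ xs,
      Real.log (∫ x, Real.exp (Real.sqrt r * z * x + r * x * xs - r / 2 * x ^ 2) ∂(ρ t))
        ∂(ρ t) ∂(gaussianReal 0 1))
    (hφm : ∀ t, φm t = ∫ z, ∫ xs,
      Real.log (∫ x, Real.exp (Real.sqrt r * z * x - r * x * xs - r / 2 * x ^ 2) ∂(ρ t))
        ∂(ρ t) ∂(gaussianReal 0 1))
    (hφ : ∀ t, φ t = φp t - φm t) :
    φ 0 = 0 ∧ HasDerivWithinAt φ 0 (Set.Icc (0 : ℝ) 1) 0 := by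
  have hγ : Measure.map (fun x : ℝ => -x) (gaussianReal 0 1) = gaussianReal 0 1 := gauss_neg
  haveI hμP : IsProbabilityMeasure μ := muProb ν μ hμ
  have hμsymm : Measure.map (fun x : ℝ => -x) μ = μ := muSymm ν μ hμ
  have hμK : ∀ᵐ x ∂μ, |x| ≤ K := muSupp ν K hsupp μ hμ
  have hexpo1 : ∀ z xs x : ℝ,
      Real.sqrt r * z * x + r * x * xs - r / 2 * x ^ 2 = expo r z xs x := fun _ _ _ => rfl
  have hexpo2 : ∀ z xs x : ℝ,
      Real.sqrt r * z * x - r * x * xs - r / 2 * x ^ 2 = expo r z (-xs) x := by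
    intro z xs x; unfold expo; ring
  have hφrep : ∀ t ∈ Icc (0:ℝ) 1, φ t = t * ∫ z,
      (∫ xs, (Real.log (∫ x, Real.exp (expo r z xs x) ∂(ρ t))
        - Real.log (∫ x, Real.exp (expo r z (-xs) x) ∂(ρ t))) ∂ν) ∂gaussianReal 0 1 := by
    intro t ht
    rw [hφ, hφp, hφm]
    simp only [hexpo1, hexpo2]
    exact rep hr hK hμK hsupp hρ hμsymm ht
  have hE0 : 0 ≤ ∫ z, Real.exp (2 * cb r K z) ∂gaussianReal 0 1 :=
    integral_nonneg fun z => (Real.exp_pos _).le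
  set E := ∫ z, Real.exp (2 * cb r K z) ∂gaussianReal 0 1 with hE
  have hφbound : ∀ t ∈ Icc (0:ℝ) 1, |φ t| ≤ 4 * E * t ^ 2 := by
    intro t ht
    rw [hφrep t ht, abs_mul, abs_of_nonneg ht.1]
    have hHb := Hbound hr hK hμK hsupp hρ hμsymm hγ ht
    calc t * |∫ z, (∫ xs, (Real.log (∫ x, Real.exp (expo r z xs x) ∂(ρ t))
          - Real.log (∫ x, Real.exp (expo r z (-xs) x) ∂(ρ t))) ∂ν) ∂gaussianReal 0 1|
        ≤ t * (4 * t * E) := mul_le_mul_of_nonneg_left hHb ht.1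
      _ = 4 * E * t ^ 2 := by ring
  have hφ0 : φ 0 = 0 := by
    have := hφrep 0 (by constructor <;> norm_num)
    simpa using this
  refine ⟨hφ0, ?_⟩
  rw [hasDerivWithinAt_iff_isLittleO, Asymptotics.isLittleO_iff]
  intro ε hε
  have hδ : 0 < ε / (4 * E + 1) := by positivity
  have h1 : ∀ᶠ t in nhdsWithin 0 (Icc (0:ℝ) 1), t ∈ Icc (0:ℝ) 1 := eventually_mem_nhdsWithin
  have h2 : ∀ᶠ t in nhdsWithin 0 (Icc (0:ℝ) 1), |t - 0| < ε / (4 * E + 1) :=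
    eventually_nhdsWithin_of_eventually_nhds (eventually_abs_sub_lt 0 hδ)
  filter_upwards [h1, h2] with t ht hlt
  have hb := hφbound t ht
  have ht0 : 0 ≤ t := ht.1
  rw [sub_zero, abs_of_nonneg ht0] at hlt
  have hεb : 4 * E * t ≤ ε := by
    have h3 : (4 * E) * t ≤ (4 * E) * (ε / (4 * E + 1)) :=
      mul_le_mul_of_nonneg_left hlt.le (by positivity)
    have h4 : (4 * E) * (ε / (4 * E + 1)) ≤ ε := by
      rw [div_eq_mul_inv, ← mul_assoc]
      rw [mul_comm (4 * E) ε, mul_assoc]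
      nth_rewrite 2 [← mul_one ε]
      gcongr
      rw [mul_inv_le_iff₀ (by positivity)]
      linarith
    linarith
  simp only [hφ0, sub_zero, smul_eq_mul, mul_zero, Real.norm_eq_abs]
  calc |φ t| ≤ 4 * E * t ^ 2 := hb
    _ = (4 * E * t) * t := by ring
    _ ≤ ε * t := mul_le_mul_of_nonneg_right hεb ht0
    _ = ε * |t| := by rw [abs_of_nonneg ht0]
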